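/- For every nonnegative function $f:\mathbb{R}\to\mathbb{R}$ which is integrable and differentiable with derivative $f'$ square-integrable, one has $\int_{\mathbb{R}} f^4\,dx \le \frac{9}{4\pi^2}\left(\int_{\mathbb{R}} f\,dx\right)^2\int_{\mathbb{R}} (f')^2\,dx$. -/

import Mathlib

open MeasureTheory Set Filter Topology

namespace SzNagyAux

lemma abs_le_half_sq_add_one (t : ℝ) : |t| ≤ (t ^ 2 + 1) / 2 := by
  nlinarith [sq_nonneg (|t| - 1), sq_abs t, abs_nonneg t]

lemma sin_lower {d u : ℝ} (hd0 : 0 < d) (hd : d ≤ Real.pi / 2)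
    (h1 : d ≤ u) (h2 : u ≤ Real.pi - d) : Real.sin d ≤ Real.sin u := by
  have hπ := Real.pi_pos
  have hm1 : d ∈ Icc (-(Real.pi / 2)) (Real.pi / 2) := ⟨by linarith, hd⟩
  rcases le_total u (Real.pi / 2) with h | h
  · have hm2 : u ∈ Icc (-(Real.pi / 2)) (Real.pi / 2) := ⟨by linarith, h⟩
    exact Real.strictMonoOn_sin.monotoneOn hm1 hm2 h1
  · have hm2 : Real.pi - u ∈ Icc (-(Real.pi / 2)) (Real.pi / 2) := ⟨by linarith, by linarith⟩
    rw [show Real.sin u = Real.sin (Real.pi - u) from (Real.sin_pi_sub u).symm]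
    exact Real.strictMonoOn_sin.monotoneOn hm1 hm2 (by linarith)

end SzNagyAux

open SzNagyAux

/-- The Sz.-Nagy inequality with the sharp constant `C_* = 9/(4π²)` in the case `m = 3`:
for every nonnegative integrable differentiable `f : ℝ → ℝ` with square-integrable
derivative, `∫ f⁴ ≤ (9/(4π²)) (∫ f)² ∫ (f')²`. -/
theorem sz_nagy_inequality_m_eq_three (f : ℝ → ℝ) (hf : ∀ x, 0 ≤ f x)
    (hint : Integrable f) (hdiff : Differentiable ℝ f)
    (hL2 : Integrable (fun x => (deriv f x) ^ 2)) :
    Integrable (fun x => f x ^ 4) ∧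
    ∫ x, f x ^ 4 ≤ (9 / (4 * Real.pi ^ 2)) * (∫ x, f x) ^ 2 * ∫ x, (deriv f x) ^ 2 := by
  have hπ : (0:ℝ) < Real.pi := Real.pi_pos
  have hcont : Continuous f := hdiff.continuous
  have hmeas : Measurable (deriv f) := measurable_deriv f
  set B := ∫ x, f x with hB
  set D := ∫ x, (deriv f x) ^ 2 with hD
  have hB0 : 0 ≤ B := integral_nonneg hf
  have hD0 : 0 ≤ D := integral_nonneg fun x => sq_nonneg _
  -- interval integrability of the derivative
  have hii : ∀ a b : ℝ, IntervalIntegrable (deriv f) volume a b := by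
    intro a b
    have h1 : IntervalIntegrable (fun x => ((deriv f x) ^ 2 + 1) / 2) volume a b :=
      (hL2.intervalIntegrable.add intervalIntegrable_const).div_const 2
    refine h1.mono_fun hmeas.aestronglyMeasurable (Eventually.of_forall fun x => ?_)
    have := abs_le_half_sq_add_one (deriv f x)
    simpa [Real.norm_eq_abs, abs_div,
      abs_of_nonneg (show (0:ℝ) ≤ (deriv f x) ^ 2 + 1 by positivity)] using this
  -- FTC for f
  have hFTCf : ∀ a b : ℝ, f b - f a = ∫ x in a..b, deriv f x := fun a b =>
    (intervalIntegral.integral_deriv_eq_sub (fun x _ => hdiff x) (hii a b)).symm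
  -- bound on the integral of |f'| over an interval
  have hsq_le : ∀ a b : ℝ, a ≤ b → ∫ x in a..b, (deriv f x) ^ 2 ≤ D := by
    intro a b hab
    rw [intervalIntegral.integral_of_le hab]
    exact setIntegral_le_integral hL2 (Eventually.of_forall fun x => sq_nonneg _)
  have habs : ∀ a b : ℝ, a ≤ b → (∫ x in a..b, |deriv f x|) ≤ (D + (b - a)) / 2 := by
    intro a b hab
    have h1 : (∫ x in a..b, |deriv f x|) ≤ ∫ x in a..b, ((deriv f x) ^ 2 + 1) / 2 := by
      refine intervalIntegral.integral_mono_on hab (hii a b).abs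
        ((hL2.intervalIntegrable.add intervalIntegrable_const).div_const 2)
        (fun x _ => abs_le_half_sq_add_one _)
    have h2 : ∫ x in a..b, ((deriv f x) ^ 2 + 1) / 2
        = ((∫ x in a..b, (deriv f x) ^ 2) + (b - a)) / 2 := by
      rw [intervalIntegral.integral_div, intervalIntegral.integral_add
        hL2.intervalIntegrable intervalIntegrable_const, intervalIntegral.integral_const]
      simp
    have h3 := hsq_le a b hab
    rw [h2] at h1
    linarith
  -- global bound on f
  set M : ℝ := max 1 (D + 2 * B) with hM
  have hM1 : (1:ℝ) ≤ M := le_max_left _ _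
  have hM0 : (0:ℝ) < M := lt_of_lt_of_le one_pos hM1
  have hfM : ∀ x, f x ≤ M := by
    intro x₀
    by_contra hlt
    push_neg at hlt
    set m := f x₀ with hm
    have hMm : M < m := hlt
    set η := m - D with hη
    have hη2B : 2 * B < η := by
      have := le_max_right 1 (D + 2 * B)
      simp only [← hM] at this
      simp only [hη]; linarith
    have hη0 : 0 < η := by linarith
    have hlow : ∀ y ∈ Icc (x₀ - η) x₀, m / 2 ≤ f y := by
      intro y hy
      have hy1 : x₀ - η ≤ y := hy.1
      have hy2 : y ≤ x₀ := hy.2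
      have h1 : f x₀ - f y = ∫ x in y..x₀, deriv f x := hFTCf y x₀
      have h2 : (∫ x in y..x₀, deriv f x) ≤ ∫ x in y..x₀, |deriv f x| := by
        refine intervalIntegral.integral_mono_on hy2 (hii y x₀) (hii y x₀).abs
          (fun x _ => le_abs_self _)
      have h3 : (∫ x in y..x₀, |deriv f x|) ≤ (D + (x₀ - y)) / 2 := habs y x₀ hy2
      have h4 : x₀ - y ≤ η := by linarith
      have : f x₀ - f y ≤ (D + η) / 2 := by linarith
      simp only [hη] at this ⊢
      linarith
    have hBge : (∫ x in Icc (x₀ - η) x₀, f x) ≤ B :=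
      setIntegral_le_integral hint (Eventually.of_forall hf)
    have hconst : (∫ x in Icc (x₀ - η) x₀, (fun _ => m / 2) x) ≤ ∫ x in Icc (x₀ - η) x₀, f x := by
      refine setIntegral_mono_on ((integrableOn_const_iff).mpr (Or.inr ?_)) hint.integrableOn
        measurableSet_Icc hlow
      rw [Real.volume_Icc]
      exact ENNReal.ofReal_lt_top
    have hval : (∫ x in Icc (x₀ - η) x₀, (fun _ => m / 2) x) = η * (m / 2) := by
      rw [setIntegral_const, Real.volume_real_Icc]
      rw [max_eq_left (by linarith), smul_eq_mul]
      ring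
    rw [hval] at hconst
    nlinarith
  -- integrability of f⁴
  have hint4 : Integrable (fun x => f x ^ 4) := by
    refine Integrable.mono' (hint.const_mul (M ^ 3)) ((hcont.pow 4).aestronglyMeasurable)
      (Eventually.of_forall fun x => ?_)
    have h1 : 0 ≤ f x ^ 4 := by positivity
    rw [Real.norm_eq_abs, abs_of_nonneg h1]
    have h2 : f x ^ 3 ≤ M ^ 3 := pow_le_pow_left₀ (hf x) (hfM x) 3
    calc f x ^ 4 = f x ^ 3 * f x := by ring
      _ ≤ M ^ 3 * f x := mul_le_mul_of_nonneg_right h2 (hf x)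
  have hA0 : 0 ≤ ∫ x, f x ^ 4 := integral_nonneg fun x => by positivity
  set A := ∫ x, f x ^ 4 with hA
  refine ⟨hint4, ?_⟩
  -- trivial case B = 0
  rcases eq_or_lt_of_le hB0 with hBz | hBpos
  · have h1 : f =ᵐ[volume] 0 := by
      have := (integral_eq_zero_iff_of_nonneg hf hint).mp hBz.symm
      exact this
    have hfz : f = 0 := (hcont.ae_eq_iff_eq volume continuous_const).mp h1
    have : A = 0 := by
      rw [hA, hfz]; simp
    rw [this]
    positivity
  -- main case
  -- the cumulative mass function F
  set F : ℝ → ℝ := fun x => ∫ t in Iic x, f t with hFdef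
  have hFderiv : ∀ x, HasDerivAt F (f x) x := by
    intro x
    have hkey : ∀ y : ℝ, F y = F (x - 1) + ∫ t in (x-1)..y, f t := by
      intro y
      have h0 := intervalIntegral.integral_Iic_sub_Iic (μ := volume) (f := f)
        (a := x - 1) (b := y) (hint.integrableOn) (hint.integrableOn)
      show (∫ t in Iic y, f t) = (∫ t in Iic (x-1), f t) + ∫ t in (x-1)..y, f t
      linarith
    have h2 : HasDerivAt (fun y => ∫ t in (x-1)..y, f t) (f x) x :=
      intervalIntegral.integral_hasDerivAt_right (hint.intervalIntegrable)
        ⟨univ, univ_mem, hint.aestronglyMeasurable.restrict⟩ hcont.continuousAt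
    have h3 := h2.const_add (F (x - 1))
    have : F = fun y => F (x - 1) + ∫ t in (x-1)..y, f t := funext hkey
    rw [this]
    exact h3
  have hFcont : Continuous F := by
    have : Differentiable ℝ F := fun x => (hFderiv x).differentiableAt
    exact this.continuous
  have hF0 : ∀ x, 0 ≤ F x := fun x => setIntegral_nonneg measurableSet_Iic fun t _ => hf t
  have hFB : ∀ x, F x ≤ B := fun x => setIntegral_le_integral hint (Eventually.of_forall hf)
  -- sequences going to ∓∞ along which f tends to 0
  have hseqlow : ∀ r δ : ℝ, 0 < δ → ∃ x, x ≤ r ∧ f x < δ := by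
    intro r δ hδ
    by_contra hcon
    push_neg at hcon
    have h1 : IntegrableOn (fun _ : ℝ => δ) (Iic r) volume := by
      refine Integrable.mono' (hint.integrableOn) aestronglyMeasurable_const ?_
      refine (ae_restrict_iff' measurableSet_Iic).mpr (Eventually.of_forall fun x hx => ?_)
      have := hcon x hx
      rw [Real.norm_eq_abs, abs_of_pos hδ]
      linarith
    rcases (integrableOn_const_iff).mp h1 with h | h
    · exact absurd h (by simpa using hδ.ne')
    · rw [Real.volume_Iic] at h
      exact absurd h (by simp)
  have hsequp : ∀ r δ : ℝ, 0 < δ → ∃ x, r ≤ x ∧ f x < δ := by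
    intro r δ hδ
    by_contra hcon
    push_neg at hcon
    have h1 : IntegrableOn (fun _ : ℝ => δ) (Ici r) volume := by
      refine Integrable.mono' (hint.integrableOn) aestronglyMeasurable_const ?_
      refine (ae_restrict_iff' measurableSet_Ici).mpr (Eventually.of_forall fun x hx => ?_)
      have := hcon x hx
      rw [Real.norm_eq_abs, abs_of_pos hδ]
      linarith
    rcases (integrableOn_const_iff).mp h1 with h | h
    · exact absurd h (by simpa using hδ.ne')
    · rw [Real.volume_Ici] at h
      exact absurd h (by simp)
  choose aa haa1 haa2 using fun n : ℕ => hseqlow (-(n:ℝ)) (1/(n+1)) (by positivity)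
  choose bb hbb1 hbb2 using fun n : ℕ => hsequp (n:ℝ) (1/(n+1)) (by positivity)
  have haat : Tendsto aa atTop atBot :=
    tendsto_atBot_mono haa1 (tendsto_neg_atTop_atBot.comp tendsto_natCast_atTop_atTop)
  have hbbt : Tendsto bb atTop atTop :=
    tendsto_atTop_mono hbb1 tendsto_natCast_atTop_atTop
  have haabb : ∀ n : ℕ, aa n ≤ bb n := by
    intro n
    have h1 : -(n:ℝ) ≤ (n:ℝ) := by
      have : (0:ℝ) ≤ n := n.cast_nonneg
      linarith
    exact le_trans (haa1 n) (le_trans h1 (hbb1 n))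
  have hfa : Tendsto (fun n => f (aa n)) atTop (𝓝 0) := by
    refine squeeze_zero (fun n => hf _) (fun n => (haa2 n).le) ?_
    exact tendsto_one_div_add_atTop_nhds_zero_nat
  have hfb : Tendsto (fun n => f (bb n)) atTop (𝓝 0) := by
    refine squeeze_zero (fun n => hf _) (fun n => (hbb2 n).le) ?_
    exact tendsto_one_div_add_atTop_nhds_zero_nat
  -- main estimate for each ε > 0
  have hmain : ∀ ε : ℝ, 0 < ε → (Real.pi / (B + 2*ε))^2 * A ≤ 9/4 * D := by
    intro ε hε
    set c : ℝ := Real.pi / (B + 2*ε) with hc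
    have hBε : 0 < B + 2*ε := by linarith
    have hc0 : 0 < c := div_pos hπ hBε
    have hcB : c * (B + 2*ε) = Real.pi := by
      rw [hc]
      field_simp
    set u : ℝ → ℝ := fun x => c * (F x + ε) with hu
    have hucont : Continuous u := continuous_const.mul (hFcont.add continuous_const)
    have hu1 : ∀ x, c * ε ≤ u x := by
      intro x
      have := hF0 x
      show c * ε ≤ c * (F x + ε)
      nlinarith
    have hu2 : ∀ x, u x ≤ Real.pi - c * ε := by
      intro x
      have h1 := hFB x
      have : u x ≤ c * (B + ε) := by
        show c * (F x + ε) ≤ c * (B + ε)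
        nlinarith
      nlinarith
    have hcε0 : 0 < c * ε := mul_pos hc0 hε
    have hcεhalf : c * ε ≤ Real.pi / 2 := by nlinarith
    have hu0 : ∀ x, 0 < u x := fun x => lt_of_lt_of_le hcε0 (hu1 x)
    have huπ : ∀ x, u x < Real.pi := fun x => lt_of_le_of_lt (hu2 x) (by linarith)
    have hsinpos : ∀ x, 0 < Real.sin (u x) :=
      fun x => Real.sin_pos_of_pos_of_lt_pi (hu0 x) (huπ x)
    set sd : ℝ := Real.sin (c * ε) with hsd
    have hsd0 : 0 < sd := Real.sin_pos_of_pos_of_lt_pi hcε0 (by linarith)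
    have hsinge : ∀ x, sd ≤ Real.sin (u x) :=
      fun x => sin_lower hcε0 hcεhalf (hu1 x) (hu2 x)
    set φ : ℝ → ℝ := fun x => Real.cos (u x) / Real.sin (u x) with hφ
    have hφcont : Continuous φ :=
      (Real.continuous_cos.comp hucont).div (Real.continuous_sin.comp hucont)
        (fun x => (hsinpos x).ne')
    have hφbound : ∀ x, |φ x| ≤ 1 / sd := by
      intro x
      rw [hφ, abs_div, abs_of_pos (hsinpos x)]
      refine div_le_div₀ (by positivity) (Real.abs_cos_le_one _) hsd0 (hsinge x)
    have hφderiv : ∀ x, HasDerivAt φ (-(c * f x) * (1 + φ x ^ 2)) x := by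
      intro x
      have hu' : HasDerivAt u (c * f x) x := ((hFderiv x).add_const ε).const_mul c
      have hcosd : HasDerivAt (fun y => Real.cos (u y)) (-Real.sin (u x) * (c * f x)) x :=
        (Real.hasDerivAt_cos (u x)).comp x hu'
      have hsind : HasDerivAt (fun y => Real.sin (u y)) (Real.cos (u x) * (c * f x)) x :=
        (Real.hasDerivAt_sin (u x)).comp x hu'
      have h3 := hcosd.div hsind (hsinpos x).ne'
      refine h3.congr_deriv ?_
      have hs := (hsinpos x).ne'
      have hpyth := Real.sin_sq_add_cos_sq (u x)
      show _ = -(c * f x) * (1 + (Real.cos (u x) / Real.sin (u x)) ^ 2)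
      rw [div_eq_iff (pow_ne_zero 2 hs)]
      field_simp
      ring
    set G : ℝ → ℝ := fun x => f x ^ 3 * φ x with hG
    set E : ℝ → ℝ := fun x => deriv f x * (3 * f x ^ 2 * φ x) - c * (f x ^ 4 * (1 + φ x ^ 2))
      with hE
    have hGderiv : ∀ x, HasDerivAt G (E x) x := by
      intro x
      have h1 : HasDerivAt (fun y => f y ^ 3) (3 * f x ^ 2 * deriv f x) x := by
        have h0 := (hdiff x).hasDerivAt.pow 3
        refine h0.congr_deriv ?_
        try push_cast
        try ring
      have h2 := h1.mul (hφderiv x)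
      refine h2.congr_deriv ?_
      show _ = deriv f x * (3 * f x ^ 2 * φ x) - c * (f x ^ 4 * (1 + φ x ^ 2))
      ring
    have hGbound : ∀ x, |G x| ≤ f x ^ 3 * (1 / sd) := by
      intro x
      rw [hG, abs_mul, abs_of_nonneg (pow_nonneg (hf x) 3)]
      exact mul_le_mul_of_nonneg_left (hφbound x) (pow_nonneg (hf x) 3)
    have hEint : ∀ a b : ℝ, IntervalIntegrable E volume a b := by
      intro a b
      refine IntervalIntegrable.sub ?_ ?_
      · exact (hii a b).mul_continuousOn
          (((continuous_const.mul (hcont.pow 2)).mul hφcont).continuousOn)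
      · exact (Continuous.intervalIntegrable (by fun_prop) a b)
    have hFTCG : ∀ a b : ℝ, (∫ x in a..b, E x) = G b - G a := fun a b =>
      intervalIntegral.integral_eq_sub_of_hasDerivAt (fun x _ => hGderiv x) (hEint a b)
    set h : ℝ → ℝ := fun x => 9/4 * (deriv f x)^2 - c^2 * f x ^ 4 with hh
    have hhint : Integrable h := (hL2.const_mul _).sub (hint4.const_mul _)
    have hkey : ∀ a b : ℝ, a ≤ b → c * (G b - G a) ≤ ∫ x in a..b, h x := by
      intro a b hab
      have hinth : IntervalIntegrable h volume a b := hhint.intervalIntegrable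
      have e1 : (∫ x in a..b, h x) - c * (G b - G a)
          = ∫ x in a..b, (3/2 * deriv f x - c * f x ^ 2 * φ x)^2 := by
        rw [← hFTCG a b, ← intervalIntegral.integral_const_mul,
          ← intervalIntegral.integral_sub hinth ((hEint a b).const_mul c)]
        refine intervalIntegral.integral_congr fun x hx => ?_
        simp only [hh, hE]
        ring
      have e2 : 0 ≤ ∫ x in a..b, (3/2 * deriv f x - c * f x ^ 2 * φ x)^2 :=
        intervalIntegral.integral_nonneg hab fun x _ => sq_nonneg _
      linarith
    have hGa : Tendsto (fun n => G (aa n)) atTop (𝓝 0) := by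
      refine squeeze_zero_norm (fun n => hGbound (aa n)) ?_
      have h1 : Tendsto (fun n => f (aa n) ^ 3) atTop (𝓝 0) := by
        have := hfa.pow 3
        simpa using this
      simpa using h1.mul_const (1/sd)
    have hGb : Tendsto (fun n => G (bb n)) atTop (𝓝 0) := by
      refine squeeze_zero_norm (fun n => hGbound (bb n)) ?_
      have h1 : Tendsto (fun n => f (bb n) ^ 3) atTop (𝓝 0) := by
        have := hfb.pow 3
        simpa using this
      simpa using h1.mul_const (1/sd)
    have hlhs : Tendsto (fun n => c * (G (bb n) - G (aa n))) atTop (𝓝 0) := by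
      have := (hGb.sub hGa).const_mul c
      simpa using this
    have hIab : Tendsto (fun n => ∫ x in aa n..bb n, h x) atTop (𝓝 (∫ x, h x)) :=
      intervalIntegral_tendsto_integral hhint haat hbbt
    have h0le : (0:ℝ) ≤ ∫ x, h x :=
      le_of_tendsto_of_tendsto' hlhs hIab fun n => hkey _ _ (haabb n)
    have hsplit : (∫ x, h x) = 9/4 * D - c^2 * A := by
      rw [hh]
      rw [integral_sub (hL2.const_mul _) (hint4.const_mul _),
        integral_const_mul, integral_const_mul]
    rw [hsplit] at h0le
    linarith
  -- pass to the limit ε → 0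
  have hεseq : Tendsto (fun n : ℕ => (Real.pi / (B + 2*(1/(n+1))))^2 * A) atTop
      (𝓝 ((Real.pi / B)^2 * A)) := by
    refine Tendsto.mul_const A (Tendsto.pow ?_ 2)
    refine Tendsto.div tendsto_const_nhds ?_ (ne_of_gt hBpos)
    have h1 : Tendsto (fun n : ℕ => 1/((n:ℝ)+1)) atTop (𝓝 0) :=
      tendsto_one_div_add_atTop_nhds_zero_nat
    have := (h1.const_mul 2).const_add B
    simpa using this
  have hfin : (Real.pi / B)^2 * A ≤ 9/4 * D :=
    le_of_tendsto hεseq (Eventually.of_forall fun n => hmain (1/(n+1)) (by positivity))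
  -- final algebra
  rw [div_pow] at hfin
  have hB2 : (0:ℝ) < B^2 := by positivity
  have h2 : Real.pi^2 * A ≤ 9/4 * D * B^2 := by
    rw [div_mul_eq_mul_div, div_le_iff₀ hB2] at hfin
    linarith
  rw [show (9 / (4 * Real.pi ^ 2) * B ^ 2 * D) = (9 * B^2 * D) / (4 * Real.pi^2) by ring,
    le_div_iff₀ (by positivity)]
  nlinarith
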